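/- Symmetrization identity for second parameter derivatives of log-sum-exp: for every (y,ρ) ∈ Ω × ℝᵐ and all indices a, b ∈ {1,…,n}, ∂²/∂y_a∂y_b log S(y,ρ) = S(y,ρ)^{−2} · Σ_{α,β ∈ A} c_α(y) c_β(y) e^{⟨α+β, ρ⟩} · [ ∂²_{y_a y_b} log c_α(y) + ½ · ∂_{y_a} log(c_α(y)/c_β(y)) · ∂_{y_b} log(c_α(y)/c_β(y)) ], where the double sum runs over all ordered pairs (α,β) ∈ A × A. -/

import Mathlib

open scoped BigOperators
open MeasureTheory Real

noncomputable section

/-- Partial derivative of `f` at `p` in the `i`-th coordinate direction. -/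
def pd {k : ℕ} (f : (Fin k → ℝ) → ℝ) (i : Fin k) (p : Fin k → ℝ) : ℝ :=
  fderiv ℝ f p (Pi.single i 1)

/-- Euclidean gradient, as the vector of partial derivatives. -/
def grad {k : ℕ} (f : (Fin k → ℝ) → ℝ) (p : Fin k → ℝ) : Fin k → ℝ :=
  fun i => pd f i p

/-- Hessian matrix of second partial derivatives. -/
def hess {k : ℕ} (f : (Fin k → ℝ) → ℝ) (p : Fin k → ℝ) : Matrix (Fin k) (Fin k) ℝ :=
  Matrix.of fun i j => pd (fun q => pd f j q) i p

/-- Euclidean Laplacian. -/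
def lap {k : ℕ} (f : (Fin k → ℝ) → ℝ) (p : Fin k → ℝ) : ℝ :=
  ∑ i, pd (fun q => pd f i q) i p

/-- Euclidean inner product on `Fin k → ℝ`. -/
def dotp {k : ℕ} (v w : Fin k → ℝ) : ℝ := ∑ i, v i * w i

section Helpers
variable {k : ℕ}

lemma pd_congr' {f g : (Fin k → ℝ) → ℝ} {x : Fin k → ℝ} (h : f =ᶠ[nhds x] g) (i : Fin k) :
    pd f i x = pd g i x := by
  unfold pd; rw [h.fderiv_eq]

lemma pd_log' {f : (Fin k → ℝ) → ℝ} {x : Fin k → ℝ} (hf : DifferentiableAt ℝ f x)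
    (hx : f x ≠ 0) (i : Fin k) :
    pd (fun y => Real.log (f y)) i x = pd f i x / f x := by
  unfold pd
  rw [fderiv.log hf hx]
  simp [div_eq_inv_mul]

lemma pd_sum' {ι : Type*} (s : Finset ι) {f : ι → (Fin k → ℝ) → ℝ} {x : Fin k → ℝ}
    (hf : ∀ a ∈ s, DifferentiableAt ℝ (f a) x) (i : Fin k) :
    pd (fun y => ∑ a ∈ s, f a y) i x = ∑ a ∈ s, pd (f a) i x := by
  unfold pd
  rw [fderiv_fun_sum hf]
  simp

lemma pd_mul_const' {f : (Fin k → ℝ) → ℝ} {x : Fin k → ℝ} (hf : DifferentiableAt ℝ f x)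
    (r : ℝ) (i : Fin k) :
    pd (fun y => f y * r) i x = pd f i x * r := by
  unfold pd
  rw [fderiv_mul_const hf]
  simp [mul_comm]

lemma pd_sub' {f g : (Fin k → ℝ) → ℝ} {x : Fin k → ℝ} (hf : DifferentiableAt ℝ f x)
    (hg : DifferentiableAt ℝ g x) (i : Fin k) :
    pd (fun y => f y - g y) i x = pd f i x - pd g i x := by
  unfold pd
  rw [fderiv_fun_sub hf hg]
  simp

lemma pd_div' {f g : (Fin k → ℝ) → ℝ} {x : Fin k → ℝ} (hf : DifferentiableAt ℝ f x)
    (hg : DifferentiableAt ℝ g x) (hx : g x ≠ 0) (i : Fin k) :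
    pd (fun y => f y / g y) i x = (pd f i x * g x - f x * pd g i x) / g x ^ 2 := by
  have hinv : fderiv ℝ (fun y => (g y)⁻¹) x = (-(g x ^ 2)⁻¹) • fderiv ℝ g x :=
    ((hasDerivAt_inv hx).comp_hasFDerivAt x hg.hasFDerivAt).fderiv
  have hdiv : (fun y => f y / g y) = fun y => f y * (g y)⁻¹ := by
    funext y; rw [div_eq_mul_inv]
  unfold pd
  rw [hdiv, fderiv_fun_mul hf (show DifferentiableAt ℝ (fun y => (g y)⁻¹) x from hg.inv hx)]
  simp only [ContinuousLinearMap.add_apply, ContinuousLinearMap.smul_apply, hinv,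
    smul_eq_mul, neg_mul]
  field_simp
  ring

end Helpers

/-- **Symmetrization identity for second parameter derivatives of log-sum-exp:** with
`S(y,ρ) = Σ_{α ∈ A} c_α(y) e^{⟨α,ρ⟩}`, for `y ∈ Ω` one has
`∂²_{y_a y_b} log S = S⁻² Σ_{α,β} c_α c_β e^{⟨α+β,ρ⟩}
  [∂²_{y_a y_b} log c_α + ½ ∂_{y_a} log(c_α/c_β) ∂_{y_b} log(c_α/c_β)]`. -/
theorem log_sum_exp_second_parameter_derivative_symmetrization
    {m n : ℕ} (hm : 1 ≤ m) (hn : 1 ≤ n)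
    (Ω : Set (Fin n → ℝ)) (hΩ : IsOpen Ω)
    (A : Finset (Fin m → ℝ)) (hA : A.Nonempty)
    (c : (Fin m → ℝ) → (Fin n → ℝ) → ℝ)
    (hc : ∀ α ∈ A, ContDiffOn ℝ (⊤ : ℕ∞) (c α) Ω ∧ ∀ y ∈ Ω, 0 < c α y) :
    ∀ y ∈ Ω, ∀ (ρ : Fin m → ℝ) (i j : Fin n),
      pd (fun y'' =>
          pd (fun y' => Real.log (∑ α ∈ A, c α y' * Real.exp (dotp α ρ))) j y'') i y
        = ((∑ α ∈ A, c α y * Real.exp (dotp α ρ)) ^ 2)⁻¹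
            * ∑ α ∈ A, ∑ β ∈ A,
                c α y * c β y * Real.exp (dotp (α + β) ρ)
                  * (pd (fun y'' => pd (fun y' => Real.log (c α y')) j y'') i y
                      + (1 / 2)
                        * pd (fun y' => Real.log (c α y' / c β y')) i y
                        * pd (fun y' => Real.log (c α y' / c β y')) j y) := by
  intro y hy ρ i j
  -- basic differentiability and positivity facts
  have hcpos : ∀ α ∈ A, ∀ y' ∈ Ω, 0 < c α y' := fun α hα => (hc α hα).2
  have hcd : ∀ α ∈ A, ∀ y' ∈ Ω, DifferentiableAt ℝ (c α) y' := fun α hα y' hy' =>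
    (((hc α hα).1.differentiableOn (by simp)) y' hy').differentiableAt (hΩ.mem_nhds hy')
  have hcd2 : ∀ α ∈ A, ∀ (l : Fin n), DifferentiableAt ℝ (fun y' => pd (c α) l y') y := by
    intro α hα l
    have h1 : ContDiffOn ℝ (⊤ : ℕ∞) (fun x => fderiv ℝ (c α) x) Ω :=
      (hc α hα).1.fderiv_of_isOpen hΩ (by exact_mod_cast le_top)
    have h2 : ContDiffOn ℝ (⊤ : ℕ∞) (fun x => fderiv ℝ (c α) x (Pi.single l 1)) Ω :=
      h1.clm_apply contDiffOn_const
    exact ((h2.differentiableOn (by simp)) y hy).differentiableAt (hΩ.mem_nhds hy)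
  have hSpos : ∀ y' ∈ Ω, (0:ℝ) < ∑ α ∈ A, c α y' * Real.exp (dotp α ρ) := fun y' hy' =>
    Finset.sum_pos (fun α hα => mul_pos (hcpos α hα y' hy') (Real.exp_pos _)) hA
  have hSd : ∀ y' ∈ Ω, DifferentiableAt ℝ
      (fun y₀ => ∑ α ∈ A, c α y₀ * Real.exp (dotp α ρ)) y' := fun y' hy' =>
    DifferentiableAt.fun_sum (fun α hα => (hcd α hα y' hy').mul_const _)
  have hdot : ∀ α β : Fin m → ℝ, Real.exp (dotp (α + β) ρ)
      = Real.exp (dotp α ρ) * Real.exp (dotp β ρ) := by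
    intro α β
    rw [← Real.exp_add]
    congr 1
    simp [dotp, add_mul, Finset.sum_add_distrib]
  -- LHS computation
  have hFjd : DifferentiableAt ℝ
      (fun y'' => ∑ α ∈ A, pd (c α) j y'' * Real.exp (dotp α ρ)) y :=
    DifferentiableAt.fun_sum (fun α hα => (hcd2 α hα j).mul_const _)
  have hinner_ev : (fun y'' =>
        pd (fun y' => Real.log (∑ α ∈ A, c α y' * Real.exp (dotp α ρ))) j y'')
      =ᶠ[nhds y]
      (fun y'' => (∑ α ∈ A, pd (c α) j y'' * Real.exp (dotp α ρ))
          / (∑ α ∈ A, c α y'' * Real.exp (dotp α ρ))) := by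
    filter_upwards [hΩ.mem_nhds hy] with y' hy'
    rw [pd_log' (hSd y' hy') (hSpos y' hy').ne' j,
      pd_sum' A (fun α hα => (hcd α hα y' hy').mul_const _) j,
      Finset.sum_congr rfl (fun α hα => pd_mul_const' (hcd α hα y' hy') _ j)]
  have hLHS : pd (fun y'' =>
        pd (fun y' => Real.log (∑ α ∈ A, c α y' * Real.exp (dotp α ρ))) j y'') i y
      = ((∑ α ∈ A, pd (fun y'' => pd (c α) j y'') i y * Real.exp (dotp α ρ))
            * (∑ α ∈ A, c α y * Real.exp (dotp α ρ))
          - (∑ α ∈ A, pd (c α) j y * Real.exp (dotp α ρ))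
            * (∑ α ∈ A, pd (c α) i y * Real.exp (dotp α ρ)))
        / (∑ α ∈ A, c α y * Real.exp (dotp α ρ)) ^ 2 := by
    rw [pd_congr' hinner_ev i, pd_div' hFjd (hSd y hy) (hSpos y hy).ne' i,
      pd_sum' A (fun α hα => (hcd2 α hα j).mul_const _) i,
      Finset.sum_congr rfl (fun α hα => pd_mul_const' (hcd2 α hα j) _ i),
      pd_sum' A (fun α hα => (hcd α hα y hy).mul_const _) i,
      Finset.sum_congr rfl (fun α hα => pd_mul_const' (hcd α hα y hy) _ i)]
  -- RHS per-term computations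
  have hlog2 : ∀ α ∈ A,
      pd (fun y'' => pd (fun y' => Real.log (c α y')) j y'') i y
        = (pd (fun y'' => pd (c α) j y'') i y * c α y - pd (c α) j y * pd (c α) i y)
            / (c α y) ^ 2 := by
    intro α hα
    have hev : (fun y'' => pd (fun y' => Real.log (c α y')) j y'')
        =ᶠ[nhds y] fun y'' => pd (c α) j y'' / c α y'' := by
      filter_upwards [hΩ.mem_nhds hy] with y' hy'
      exact pd_log' (hcd α hα y' hy') (hcpos α hα y' hy').ne' j
    rw [pd_congr' hev i, pd_div' (hcd2 α hα j) (hcd α hα y hy) (hcpos α hα y hy).ne' i]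
  have hlograt : ∀ α ∈ A, ∀ β ∈ A, ∀ (l : Fin n),
      pd (fun y' => Real.log (c α y' / c β y')) l y
        = pd (c α) l y / c α y - pd (c β) l y / c β y := by
    intro α hα β hβ l
    have hev : (fun y' => Real.log (c α y' / c β y'))
        =ᶠ[nhds y] fun y' => Real.log (c α y') - Real.log (c β y') := by
      filter_upwards [hΩ.mem_nhds hy] with y' hy'
      exact Real.log_div (hcpos α hα y' hy').ne' (hcpos β hβ y' hy').ne'
    rw [pd_congr' hev l,
      pd_sub' ((hcd α hα y hy).log (hcpos α hα y hy).ne')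
        ((hcd β hβ y hy).log (hcpos β hβ y hy).ne') l,
      pd_log' (hcd α hα y hy) (hcpos α hα y hy).ne' l,
      pd_log' (hcd β hβ y hy) (hcpos β hβ y hy).ne' l]
  -- rewrite the double sum term-by-term into a sum of five rank-one products
  have hterm : ∀ α ∈ A, ∀ β ∈ A,
      c α y * c β y * Real.exp (dotp (α + β) ρ)
        * (pd (fun y'' => pd (fun y' => Real.log (c α y')) j y'') i y
            + (1 / 2)
              * pd (fun y' => Real.log (c α y' / c β y')) i y
              * pd (fun y' => Real.log (c α y' / c β y')) j y)
      = (pd (fun y'' => pd (c α) j y'') i y * Real.exp (dotp α ρ))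
          * (c β y * Real.exp (dotp β ρ))
        + (-(2⁻¹) * (pd (c α) i y * pd (c α) j y / c α y * Real.exp (dotp α ρ)))
          * (c β y * Real.exp (dotp β ρ))
        + (-(2⁻¹) * (pd (c α) i y * Real.exp (dotp α ρ)))
          * (pd (c β) j y * Real.exp (dotp β ρ))
        + (-(2⁻¹) * (pd (c α) j y * Real.exp (dotp α ρ)))
          * (pd (c β) i y * Real.exp (dotp β ρ))
        + (2⁻¹ * (c α y * Real.exp (dotp α ρ)))
          * (pd (c β) i y * pd (c β) j y / c β y * Real.exp (dotp β ρ)) := by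
    intro α hα β hβ
    rw [hdot, hlog2 α hα, hlograt α hα β hβ i, hlograt α hα β hβ j]
    have ha := (hcpos α hα y hy).ne'
    have hb := (hcpos β hβ y hy).ne'
    field_simp
    ring
  rw [hLHS, Finset.sum_congr rfl (fun α hα => Finset.sum_congr rfl (fun β hβ => hterm α hα β hβ))]
  -- now a pure sum-algebra identity
  have hsplit : ∀ α ∈ A,
      (∑ β ∈ A,
        ((pd (fun y'' => pd (c α) j y'') i y * Real.exp (dotp α ρ))
            * (c β y * Real.exp (dotp β ρ))
          + (-(2⁻¹) * (pd (c α) i y * pd (c α) j y / c α y * Real.exp (dotp α ρ)))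
            * (c β y * Real.exp (dotp β ρ))
          + (-(2⁻¹) * (pd (c α) i y * Real.exp (dotp α ρ)))
            * (pd (c β) j y * Real.exp (dotp β ρ))
          + (-(2⁻¹) * (pd (c α) j y * Real.exp (dotp α ρ)))
            * (pd (c β) i y * Real.exp (dotp β ρ))
          + (2⁻¹ * (c α y * Real.exp (dotp α ρ)))
            * (pd (c β) i y * pd (c β) j y / c β y * Real.exp (dotp β ρ))))
      = (pd (fun y'' => pd (c α) j y'') i y * Real.exp (dotp α ρ))
          * (∑ β ∈ A, c β y * Real.exp (dotp β ρ))
        + (-(2⁻¹) * (pd (c α) i y * pd (c α) j y / c α y * Real.exp (dotp α ρ)))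
          * (∑ β ∈ A, c β y * Real.exp (dotp β ρ))
        + (-(2⁻¹) * (pd (c α) i y * Real.exp (dotp α ρ)))
          * (∑ β ∈ A, pd (c β) j y * Real.exp (dotp β ρ))
        + (-(2⁻¹) * (pd (c α) j y * Real.exp (dotp α ρ)))
          * (∑ β ∈ A, pd (c β) i y * Real.exp (dotp β ρ))
        + (2⁻¹ * (c α y * Real.exp (dotp α ρ)))
          * (∑ β ∈ A, pd (c β) i y * pd (c β) j y / c β y * Real.exp (dotp β ρ)) := by
    intro α hα
    simp only [Finset.sum_add_distrib, ← Finset.mul_sum]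
  rw [Finset.sum_congr rfl hsplit]
  simp only [Finset.sum_add_distrib, ← Finset.sum_mul]
  simp only [← Finset.mul_sum]
  have hSne : (∑ α ∈ A, c α y * Real.exp (dotp α ρ)) ≠ 0 := (hSpos y hy).ne'
  field_simp
  ring
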